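/- If 0 < β < 2 and J > 0, then (1/2, 1/2) is the unique critical point of F_{β,J} on (0,1)² (the point where both partial derivatives of F_{β,J} vanish), and it is a local minimum of F_{β,J}; in particular, (1/2, 1/2) is the unique local minimum of F_{β,J} on (0,1)². -/

import Mathlib

open Real Set

/-- The two-spin (q = 2) two-component Curie–Weiss free energy. -/
noncomputable def F2 (β J x y : ℝ) : ℝ :=
  -(1 / 2) * (x ^ 2 + (1 - x) ^ 2 + y ^ 2 + (1 - y) ^ 2)
    - J * (x * y + (1 - x) * (1 - y))
    + ((1 + J) / β) * (x * Real.log x + (1 - x) * Real.log (1 - x)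
        + y * Real.log y + (1 - y) * Real.log (1 - y))

lemma hasDerivAt_ent (a : ℝ) (h0 : 0 < a) (h1 : a < 1) :
    HasDerivAt (fun x : ℝ => x * Real.log x + (1 - x) * Real.log (1 - x))
      (Real.log a - Real.log (1 - a)) a := by
  have h1' : 0 < 1 - a := by linarith
  have hA := Real.hasDerivAt_mul_log h0.ne'
  have hB : HasDerivAt (fun x : ℝ => (1 - x) * Real.log (1 - x)) (-(Real.log (1 - a) + 1)) a := by
    have := (Real.hasDerivAt_mul_log h1'.ne').comp a ((hasDerivAt_id a).const_sub 1)
    exact this.congr_deriv (by ring)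
  exact (hA.add hB).congr_deriv (by ring)

lemma hasDerivAt_Lg (t : ℝ) (h0 : 0 < t) (h1 : t < 1) :
    HasDerivAt (fun t : ℝ => Real.log t - Real.log (1 - t)) (1 / t + 1 / (1 - t)) t := by
  have h1' : 0 < 1 - t := by linarith
  have hA := Real.hasDerivAt_log h0.ne'
  have hB : HasDerivAt (fun t : ℝ => Real.log (1 - t)) (-(1 / (1 - t))) t := by
    have := (Real.hasDerivAt_log h1'.ne').comp t ((hasDerivAt_id t).const_sub 1)
    exact this.congr_deriv (by ring)
  exact (hA.sub hB).congr_deriv (by ring)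

lemma hasDerivAt_F2x (β J b a : ℝ) (h0 : 0 < a) (h1 : a < 1) :
    HasDerivAt (fun x => F2 β J x b)
      (-(2 * a - 1) - J * (2 * b - 1) + ((1 + J) / β) * (Real.log a - Real.log (1 - a))) a := by
  have hent := hasDerivAt_ent a h0 h1
  have hq1 : HasDerivAt (fun x : ℝ => x ^ 2) (2 * a) a := by
    simpa using hasDerivAt_pow 2 a
  have hq2 : HasDerivAt (fun x : ℝ => (1 - x) ^ 2) (-(2 * (1 - a))) a := by
    have := ((hasDerivAt_id a).const_sub 1).pow 2
    exact this.congr_deriv (by simp only [id]; norm_num)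
  have h3 : HasDerivAt (fun x : ℝ => x * b) b a := by
    simpa using (hasDerivAt_id a).mul_const b
  have h4 : HasDerivAt (fun x : ℝ => (1 - x) * (1 - b)) (-(1 - b)) a := by
    have := ((hasDerivAt_id a).const_sub 1).mul_const (1 - b)
    simpa using this
  have H := ((((hq1.add hq2).add_const (b ^ 2)).add_const ((1 - b) ^ 2)).const_mul
      (-(1 / 2) : ℝ)).sub ((h3.add h4).const_mul J) |>.add
      (((hent.add_const (b * Real.log b)).add_const ((1 - b) * Real.log (1 - b))).const_mul
        ((1 + J) / β))
  have hfun : (fun x => F2 β J x b) =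
      fun x : ℝ => -(1 / 2) * (x ^ 2 + (1 - x) ^ 2 + b ^ 2 + (1 - b) ^ 2)
        - J * (x * b + (1 - x) * (1 - b))
        + ((1 + J) / β) * (x * Real.log x + (1 - x) * Real.log (1 - x)
            + b * Real.log b + (1 - b) * Real.log (1 - b)) := rfl
  rw [hfun]
  exact H.congr_deriv (by ring)

lemma F2_symm (β J x y : ℝ) : F2 β J x y = F2 β J y x := by
  unfold F2; ring

lemma F2_decomp (β J x y : ℝ) :
    F2 β J x y =
      (((1 + J) / β) * (x * Real.log x + (1 - x) * Real.log (1 - x)) - (1 + J) * (x - 1 / 2) ^ 2)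
      + (((1 + J) / β) * (y * Real.log y + (1 - y) * Real.log (1 - y)) - (1 + J) * (y - 1 / 2) ^ 2)
      + J * (x - y) ^ 2 - (1 + J) / 2 := by
  unfold F2; ring

section mono

variable (β : ℝ)

/-- derivative lower bound: 1/t + 1/(1-t) ≥ 4 on (0,1) -/
lemma recip_bound {t : ℝ} (h0 : 0 < t) (h1 : t < 1) : 4 ≤ 1 / t + 1 / (1 - t) := by
  have h1' : 0 < 1 - t := by linarith
  rw [div_add_div _ _ h0.ne' h1'.ne', le_div_iff₀ (by positivity)]
  nlinarith [sq_nonneg (2 * t - 1)]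

lemma mono4 : MonotoneOn (fun t : ℝ => Real.log t - Real.log (1 - t) - 4 * t) (Ioo 0 1) := by
  have hd : ∀ t ∈ Ioo (0 : ℝ) 1,
      HasDerivAt (fun t : ℝ => Real.log t - Real.log (1 - t) - 4 * t)
        (1 / t + 1 / (1 - t) - 4) t := by
    intro t ht
    have := (hasDerivAt_Lg t ht.1 ht.2).sub ((hasDerivAt_id t).const_mul 4)
    exact this.congr_deriv (by ring)
  apply monotoneOn_of_deriv_nonneg (convex_Ioo 0 1)
  · exact fun t ht => ((hd t ht).differentiableAt.continuousAt).continuousWithinAt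
  · rw [interior_Ioo]
    exact fun t ht => ((hd t ht).differentiableAt).differentiableWithinAt
  · rw [interior_Ioo]
    intro t ht
    rw [(hd t ht).deriv]
    have := recip_bound ht.1 ht.2
    linarith

lemma smono (hβ2 : β < 2) :
    StrictMonoOn (fun t : ℝ => Real.log t - Real.log (1 - t) - (2 * β) * t) (Ioo 0 1) := by
  have hd : ∀ t ∈ Ioo (0 : ℝ) 1,
      HasDerivAt (fun t : ℝ => Real.log t - Real.log (1 - t) - (2 * β) * t)
        (1 / t + 1 / (1 - t) - 2 * β) t := by
    intro t ht
    have := (hasDerivAt_Lg t ht.1 ht.2).sub ((hasDerivAt_id t).const_mul (2 * β))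
    exact this.congr_deriv (by ring)
  apply strictMonoOn_of_deriv_pos (convex_Ioo 0 1)
  · exact fun t ht => ((hd t ht).differentiableAt.continuousAt).continuousWithinAt
  · rw [interior_Ioo]
    intro t ht
    rw [(hd t ht).deriv]
    have := recip_bound ht.1 ht.2
    linarith

end mono

/-- The one-variable function Φ has a minimum at 1/2 on (0,1). -/
lemma Phi_min (β J : ℝ) (hβ0 : 0 < β) (hβ2 : β < 2) (hJ : 0 < J) {t : ℝ}
    (h0 : 0 < t) (h1 : t < 1) :
    ((1 + J) / β) * ((1:ℝ)/2 * Real.log (1/2) + (1 - 1/2) * Real.log (1 - 1/2))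
        - (1 + J) * ((1:ℝ)/2 - 1/2) ^ 2
      ≤ ((1 + J) / β) * (t * Real.log t + (1 - t) * Real.log (1 - t))
        - (1 + J) * (t - 1/2) ^ 2 := by
  set Φ : ℝ → ℝ := fun t =>
    ((1 + J) / β) * (t * Real.log t + (1 - t) * Real.log (1 - t)) - (1 + J) * (t - 1/2) ^ 2 with hΦ
  have h1J : (0 : ℝ) < 1 + J := by linarith
  have hc : (0 : ℝ) < (1 + J) / β := by positivity
  have hd : ∀ s ∈ Ioo (0 : ℝ) 1, HasDerivAt Φ
      (((1 + J) / β) * (Real.log s - Real.log (1 - s)) - (1 + J) * (2 * s - 1)) s := by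
    intro s hs
    have hA := (hasDerivAt_ent s hs.1 hs.2).const_mul ((1 + J) / β)
    have hB : HasDerivAt (fun t : ℝ => (1 + J) * (t - 1/2) ^ 2) ((1 + J) * (2 * s - 1)) s := by
      have := (((hasDerivAt_id s).sub_const (1/2)).pow 2).const_mul (1 + J)
      exact this.congr_deriv (by simp only [id_eq]; ring)
    exact hA.sub hB
  have hsign : ∀ s ∈ Ioo (0 : ℝ) 1,
      ((1 + J) / β) * (Real.log s - Real.log (1 - s)) - (1 + J) * (2 * s - 1)
        = ((1 + J) / β) * ((Real.log s - Real.log (1 - s) - (2 * β) * s) - (-β)) := by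
    intro s hs
    field_simp
    ring
  have hg := smono β hβ2
  have hhalf : (1:ℝ)/2 ∈ Ioo (0:ℝ) 1 := by norm_num
  have hghalf : Real.log (1/2) - Real.log (1 - 1/2) - (2 * β) * (1/2) = -β := by
    rw [show (1:ℝ) - 1/2 = 1/2 by norm_num]; ring
  -- Φ is antitone on Ioc 0 (1/2) and monotone on Ico (1/2) 1
  rcases le_or_gt t (1/2) with hle | hlt
  · rcases eq_or_lt_of_le hle with heq | hlt'
    · rw [heq]
    · have hanti : StrictAntiOn Φ (Ioc (0:ℝ) (1/2)) := by
        apply strictAntiOn_of_deriv_neg (convex_Ioc 0 (1/2))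
        · intro s hs
          have hs' : s ∈ Ioo (0:ℝ) 1 := ⟨hs.1, by linarith [hs.2]⟩
          exact ((hd s hs').differentiableAt.continuousAt).continuousWithinAt
        · rw [interior_Ioc]
          intro s hs
          have hs' : s ∈ Ioo (0:ℝ) 1 := ⟨hs.1, by linarith [hs.2]⟩
          rw [(hd s hs').deriv, hsign s hs']
          have := hg hs' hhalf hs.2
          simp only at this
          rw [hghalf] at this
          have hneg : (Real.log s - Real.log (1 - s) - 2 * β * s) - (-β) < 0 := by linarith
          exact mul_neg_of_pos_of_neg hc hneg
      exact (hanti ⟨h0, hle⟩ ⟨by norm_num, le_refl _⟩ hlt').le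
  · have hmono : StrictMonoOn Φ (Ico (1/2:ℝ) 1) := by
      apply strictMonoOn_of_deriv_pos (convex_Ico (1/2) 1)
      · intro s hs
        have hs' : s ∈ Ioo (0:ℝ) 1 := ⟨by linarith [hs.1], hs.2⟩
        exact ((hd s hs').differentiableAt.continuousAt).continuousWithinAt
      · rw [interior_Ico]
        intro s hs
        have hs' : s ∈ Ioo (0:ℝ) 1 := ⟨by linarith [hs.1], hs.2⟩
        rw [(hd s hs').deriv, hsign s hs']
        have := hg hhalf hs' hs.1
        simp only at this
        rw [hghalf] at this
        have hpos : 0 < (Real.log s - Real.log (1 - s) - 2 * β * s) - (-β) := by linarith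
        exact mul_pos hc hpos
    exact (hmono ⟨le_refl _, by norm_num⟩ ⟨hlt.le, h1⟩ hlt).le

/-- for 0 < β < 2 and J > 0, the point (1/2, 1/2) is the unique critical
point of F_{β,J} on (0,1)², it is a local minimum, and it is the unique local minimum
of F_{β,J} on (0,1)². -/
theorem stmt_3 (β J : ℝ) (hβ0 : 0 < β) (hβ2 : β < 2) (hJ : 0 < J) :
    (∀ a b : ℝ, a ∈ Ioo (0 : ℝ) 1 → b ∈ Ioo (0 : ℝ) 1 →
      ((deriv (fun x => F2 β J x b) a = 0 ∧ deriv (fun y => F2 β J a y) b = 0) ↔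
        (a = 1 / 2 ∧ b = 1 / 2))) ∧
    IsLocalMin (fun p : ℝ × ℝ => F2 β J p.1 p.2) (1 / 2, 1 / 2) ∧
    (∀ a b : ℝ, a ∈ Ioo (0 : ℝ) 1 → b ∈ Ioo (0 : ℝ) 1 →
      IsLocalMin (fun p : ℝ × ℝ => F2 β J p.1 p.2) (a, b) → a = 1 / 2 ∧ b = 1 / 2) := by
  have h1J : (0 : ℝ) < 1 + J := by linarith
  have hc : (0 : ℝ) < (1 + J) / β := by positivity
  have hc2 : 1 + J < 2 * ((1 + J) / β) := by
    have := div_lt_div_of_pos_left h1J hβ0 hβ2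
    linarith
  -- derivative formulas
  have hderiv1 : ∀ a b : ℝ, a ∈ Ioo (0:ℝ) 1 →
      deriv (fun x => F2 β J x b) a
        = -(2 * a - 1) - J * (2 * b - 1) + ((1 + J) / β) * (Real.log a - Real.log (1 - a)) :=
    fun a b ha => (hasDerivAt_F2x β J b a ha.1 ha.2).deriv
  have hderiv2 : ∀ a b : ℝ, b ∈ Ioo (0:ℝ) 1 →
      deriv (fun y => F2 β J a y) b
        = -(2 * b - 1) - J * (2 * a - 1) + ((1 + J) / β) * (Real.log b - Real.log (1 - b)) := by
    intro a b hb
    have hfun : (fun y => F2 β J a y) = fun y => F2 β J y a := by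
      funext y; exact F2_symm β J a y
    rw [hfun]
    exact (hasDerivAt_F2x β J a b hb.1 hb.2).deriv
  -- part 1
  have part1 : ∀ a b : ℝ, a ∈ Ioo (0 : ℝ) 1 → b ∈ Ioo (0 : ℝ) 1 →
      ((deriv (fun x => F2 β J x b) a = 0 ∧ deriv (fun y => F2 β J a y) b = 0) ↔
        (a = 1 / 2 ∧ b = 1 / 2)) := by
    intro a b ha hb
    rw [hderiv1 a b ha, hderiv2 a b hb]
    constructor
    · rintro ⟨hE1, hE2⟩
      -- first show a = b
      have hab : a = b := by
        rcases lt_trichotomy a b with h | h | h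
        · exfalso
          have hm := mono4 ha hb h.le
          simp only at hm
          nlinarith [mul_le_mul_of_nonneg_left (by linarith [hm] :
            4 * (b - a) ≤ (Real.log b - Real.log (1 - b)) - (Real.log a - Real.log (1 - a)))
            hc.le, mul_pos (sub_pos.2 h) hJ]
        · exact h
        · exfalso
          have hm := mono4 hb ha h.le
          simp only at hm
          nlinarith [mul_le_mul_of_nonneg_left (by linarith [hm] :
            4 * (a - b) ≤ (Real.log a - Real.log (1 - a)) - (Real.log b - Real.log (1 - b)))
            hc.le, mul_pos (sub_pos.2 h) hJ]
      subst hab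
      -- now solve the single equation
      have hE : ((1 + J) / β) * (Real.log a - Real.log (1 - a)) = (1 + J) * (2 * a - 1) := by
        linarith
      have hLa : Real.log a - Real.log (1 - a) = β * (2 * a - 1) := by
        apply mul_left_cancel₀ hc.ne'
        rw [hE]
        field_simp
      have hhalf : (1:ℝ)/2 ∈ Ioo (0:ℝ) 1 := by norm_num
      have hg := smono β hβ2
      have hghalf : Real.log (1/2) - Real.log (1 - 1/2) - (2 * β) * (1/2) = -β := by
        rw [show (1:ℝ) - 1/2 = 1/2 by norm_num]; ring
      have ha2 : a = 1/2 := by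
        rcases lt_trichotomy a (1/2) with h | h | h
        · exfalso
          have := hg ha hhalf h
          simp only at this
          rw [hghalf] at this
          nlinarith [hLa]
        · exact h
        · exfalso
          have := hg hhalf ha h
          simp only at this
          rw [hghalf] at this
          nlinarith [hLa]
      exact ⟨ha2, ha2⟩
    · rintro ⟨rfl, rfl⟩
      norm_num
  refine ⟨part1, ?_, ?_⟩
  · -- local min at (1/2, 1/2)
    have hopen : IsOpen (Ioo (0:ℝ) 1 ×ˢ Ioo (0:ℝ) 1) := isOpen_Ioo.prod isOpen_Ioo
    have hmem : ((1:ℝ)/2, (1:ℝ)/2) ∈ Ioo (0:ℝ) 1 ×ˢ Ioo (0:ℝ) 1 := by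
      constructor <;> norm_num
    apply Filter.eventually_of_mem (hopen.mem_nhds hmem)
    rintro ⟨x, y⟩ ⟨hx, hy⟩
    simp only
    rw [F2_decomp β J x y, F2_decomp β J (1/2) (1/2)]
    have h1 := Phi_min β J hβ0 hβ2 hJ hx.1 hx.2
    have h2 := Phi_min β J hβ0 hβ2 hJ hy.1 hy.2
    nlinarith [sq_nonneg (x - y), hJ]
  · -- unique local min
    intro a b ha hb hmin
    have hx : IsLocalMin (fun x => F2 β J x b) a := by
      have hcont : ContinuousAt (fun x : ℝ => (x, b)) a :=
        (continuous_id.prodMk continuous_const).continuousAt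
      exact IsLocalMin.comp_continuous (g := fun x : ℝ => (x, b)) hmin hcont
    have hy : IsLocalMin (fun y => F2 β J a y) b := by
      have hcont : ContinuousAt (fun y : ℝ => (a, y)) b :=
        (continuous_const.prodMk continuous_id).continuousAt
      exact IsLocalMin.comp_continuous (g := fun y : ℝ => (a, y)) hmin hcont
    exact (part1 a b ha hb).1 ⟨hx.deriv_eq_zero, hy.deriv_eq_zero⟩
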